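/- Let S = {s_1, ..., s_n} ⊆ F_{q^t}^* be a P-independent set (the least common left multiple of {X − s_i} in F_{q^t}[X; θ] has degree n) such that at most two elements of S lie in each θ-conjugacy class. Then S^{-1} = {s_1^{-1}, ..., s_n^{-1}} is also P-independent. -/

import Mathlib

open Polynomial

/-- Multiplication in the skew polynomial ring `F[X;θ]` (with `X·a = θ(a)·X`). -/
noncomputable def skewMul {F : Type} [Field F] (θ : F ≃+* F) (f g : Polynomial F) :
    Polynomial F :=
  f.sum fun i a => Polynomial.C a * g.map ((θ ^ i : F ≃+* F) : F →+* F) * Polynomial.X ^ i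

namespace SkewAux
variable {F : Type} [Field F] (θ : F ≃+* F)

@[simp] lemma ringEquiv_one_apply (a : F) : (1 : F ≃+* F) a = a := rfl

noncomputable def nprod (a : F) (k : ℕ) : F := ∏ i ∈ Finset.range k, (θ ^ i : F ≃+* F) a

@[simp] lemma nprod_zero (a : F) : nprod θ a 0 = 1 := by simp [nprod]

lemma nprod_succ (a : F) (k : ℕ) : nprod θ a (k+1) = nprod θ a k * (θ^k) a := by
  simp [nprod, Finset.prod_range_succ]

@[simp] lemma nprod_one (a : F) : nprod θ a 1 = a := by simp [nprod]

lemma nprod_ne_zero {a : F} (ha : a ≠ 0) (k : ℕ) : nprod θ a k ≠ 0 := by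
  induction k with
  | zero => simp
  | succ k ih =>
    rw [nprod_succ]
    exact mul_ne_zero ih ((map_ne_zero (θ^k)).2 ha)

noncomputable def sev (a : F) (f : Polynomial F) : F := f.sum fun k c => c * nprod θ a k

lemma sev_eq_range {f : Polynomial F} {N : ℕ} (hN : f.natDegree < N) (a : F) :
    sev θ a f = ∑ k ∈ Finset.range N, f.coeff k * nprod θ a k :=
  Polynomial.sum_over_range' f (fun n => by simp) N hN

lemma sev_C (c : F) (a : F) : sev θ a (C c) = c := by
  rcases eq_or_ne c 0 with rfl | hc
  · simp [sev]
  · rw [sev_eq_range θ (f := C c) (N := 1) (by simp), Finset.sum_range_one]; simp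

lemma coeff_skewMul_linear (h : Polynomial F) (u : F) (k : ℕ) :
    (skewMul θ h (X - C u)).coeff k
      = (if k = 0 then 0 else h.coeff (k-1)) - (θ^k) u * h.coeff k := by
  unfold skewMul
  rw [Polynomial.sum_def, Polynomial.finset_sum_coeff]
  have key : ∀ i, (C (h.coeff i) * (X - C u).map ((θ^i : F ≃+* F) : F →+* F) * X^i).coeff k
      = (if i + 1 = k then h.coeff i else 0) - (if i = k then h.coeff i * (θ^i) u else 0) := by
    intro i
    have : (X - C u).map ((θ^i : F ≃+* F) : F →+* F) = X - C ((θ^i) u) := by simp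
    rw [this]
    have expand : C (h.coeff i) * (X - C ((θ^i) u)) * X^i
        = C (h.coeff i) * X^(i+1) - C (h.coeff i) * C ((θ^i) u) * X^i := by ring
    rw [expand, coeff_sub, coeff_C_mul, ← C_mul, coeff_C_mul, coeff_X_pow, coeff_X_pow]
    simp [mul_ite, eq_comm]
  calc (∑ i ∈ h.support, (C (h.coeff i) * (X - C u).map ((θ^i : F ≃+* F) : F →+* F) * X^i).coeff k)
      = ∑ i ∈ h.support, ((if i + 1 = k then h.coeff i else 0)
          - (if i = k then h.coeff i * (θ^i) u else 0)) :=
        Finset.sum_congr rfl fun i _ => key i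
    _ = (∑ i ∈ h.support, if i + 1 = k then h.coeff i else 0)
          - ∑ i ∈ h.support, (if i = k then h.coeff i * (θ^i) u else 0) := by
        rw [Finset.sum_sub_distrib]
    _ = (if k = 0 then 0 else h.coeff (k-1)) - (θ^k) u * h.coeff k := by
        congr 1
        · rcases k with _ | m
          · simp
          · simp only [Nat.add_right_cancel_iff]
            rw [Finset.sum_ite_eq' h.support m (fun i => h.coeff i)]
            by_cases hm : m ∈ h.support
            · simp [hm]
            · simp [hm, Polynomial.notMem_support_iff.1 hm]
        · rw [Finset.sum_ite_eq' h.support k (fun i => h.coeff i * (θ^i) u)]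
          by_cases hk : k ∈ h.support
          · simp [hk, mul_comm]
          · simp [hk, Polynomial.notMem_support_iff.1 hk]

lemma sev_skewMul_linear (h : Polynomial F) (u v : F) {N : ℕ}
    (hN : (skewMul θ h (X - C u)).natDegree < N + 1) (hN' : h.natDegree < N) :
    sev θ v (skewMul θ h (X - C u))
      = ∑ k ∈ Finset.range (N+1), h.coeff k * nprod θ v k * ((θ^k) v - (θ^k) u) := by
  rw [sev_eq_range θ hN v]
  have lhs : (∑ k ∈ Finset.range (N+1), (skewMul θ h (X - C u)).coeff k * nprod θ v k)
      = (∑ k ∈ Finset.range N, (h.coeff k - (θ^(k+1)) u * h.coeff (k+1)) * nprod θ v (k+1))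
        + (-(u * h.coeff 0)) := by
    rw [Finset.sum_range_succ']
    congr 1
    · exact Finset.sum_congr rfl fun k _ => by rw [coeff_skewMul_linear]; simp
    · rw [coeff_skewMul_linear]; simp
  rw [lhs]
  have rhs : (∑ k ∈ Finset.range (N+1), h.coeff k * nprod θ v k * ((θ^k) v - (θ^k) u))
      = (∑ k ∈ Finset.range (N+1), h.coeff k * nprod θ v (k+1))
        - (∑ k ∈ Finset.range (N+1), h.coeff k * nprod θ v k * (θ^k) u) := by
    rw [← Finset.sum_sub_distrib]
    exact Finset.sum_congr rfl fun k _ => by rw [nprod_succ]; ring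
  rw [rhs]
  have hB : (∑ k ∈ Finset.range (N+1), h.coeff k * nprod θ v (k+1))
      = ∑ k ∈ Finset.range N, h.coeff k * nprod θ v (k+1) := by
    rw [Finset.sum_range_succ, Polynomial.coeff_eq_zero_of_natDegree_lt hN']
    simp
  have hA : (∑ k ∈ Finset.range (N+1), h.coeff k * nprod θ v k * (θ^k) u)
      = (∑ k ∈ Finset.range N, h.coeff (k+1) * nprod θ v (k+1) * (θ^(k+1)) u)
        + h.coeff 0 * 1 * u := by
    rw [Finset.sum_range_succ']
    simp
  rw [hB, hA]
  have split : ∀ k ∈ Finset.range N,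
      (h.coeff k - (θ^(k+1)) u * h.coeff (k+1)) * nprod θ v (k+1)
        = h.coeff k * nprod θ v (k+1)
          - h.coeff (k+1) * nprod θ v (k+1) * (θ^(k+1)) u := fun k _ => by ring
  rw [Finset.sum_congr rfl split, Finset.sum_sub_distrib]
  ring

lemma ringEquiv_pow_succ_apply (k : ℕ) (a : F) : (θ^(k+1)) a = (θ^k) (θ a) := by
  rw [pow_succ]; rfl

lemma sev_skewMul_root (h : Polynomial F) (u : F) :
    sev θ u (skewMul θ h (X - C u)) = 0 := by
  set N := (skewMul θ h (X - C u)).natDegree + h.natDegree + 1 with hNdef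
  rw [sev_skewMul_linear θ h u u (N := N) (by omega) (by omega)]
  exact Finset.sum_eq_zero fun k _ => by simp

lemma nprod_conj {c : F} (hc : c ≠ 0) (v : F) (k : ℕ) :
    nprod θ (θ c * c⁻¹ * v) k = (θ^k) c * c⁻¹ * nprod θ v k := by
  induction k with
  | zero => simp [mul_comm, mul_inv_cancel₀ hc]
  | succ k ih =>
    have hck : (θ^k) c ≠ 0 := by
      simpa using (θ^k).injective.ne_iff.2 (show c ≠ (θ^k).symm 0 by simpa using hc)
    rw [nprod_succ, ih, nprod_succ]
    rw [map_mul, map_mul, map_inv₀, ← ringEquiv_pow_succ_apply]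
    field_simp

lemma sev_skewMul_conj (h : Polynomial F) {u v : F} (hvu : v ≠ u) :
    sev θ v (skewMul θ h (X - C u))
      = (v - u) * sev θ (θ (v - u) * (v - u)⁻¹ * v) h := by
  have hc : v - u ≠ 0 := sub_ne_zero.2 hvu
  set N := (skewMul θ h (X - C u)).natDegree + h.natDegree + 1 with hNdef
  rw [sev_skewMul_linear θ h u v (N := N) (by omega) (by omega),
    sev_eq_range θ (N := N + 1) (by omega) _, Finset.mul_sum]
  refine Finset.sum_congr rfl fun k _ => ?_
  rw [nprod_conj θ hc]
  have : (θ^k) v - (θ^k) u = (θ^k) (v - u) := (map_sub _ _ _).symm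
  rw [this]
  field_simp

/-- Division: peel off a right factor `X - u` from a polynomial with skew root `u ≠ 0`. -/
lemma exists_factor {f : Polynomial F} (hf : f ≠ 0) {u : F} (hu : u ≠ 0)
    (hev : sev θ u f = 0) :
    ∃ h : Polynomial F, f = skewMul θ h (X - C u) ∧ h ≠ 0 ∧ h.natDegree + 1 = f.natDegree := by
  set d := f.natDegree with hd
  have hd1 : 1 ≤ d := by
    by_contra hlt
    have hd0 : d = 0 := by omega
    have : f = C (f.coeff 0) := Polynomial.eq_C_of_natDegree_eq_zero hd0
    rw [this, sev_C] at hev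
    exact hf (by rw [this, hev, map_zero])
  set S : ℕ → F := fun k => ∑ m ∈ Finset.Ico k (d+1), f.coeff m * nprod θ u m with hS
  have hS0 : S 0 = 0 := by
    rw [← hev, sev_eq_range θ (N := d + 1) (by omega), Finset.range_eq_Ico]
  have hSstep : ∀ k, k ≤ d → S k = f.coeff k * nprod θ u k + S (k+1) := by
    intro k hk
    rw [hS]
    exact Finset.sum_eq_sum_Ico_succ_bot (by omega) _
  have hSd : S d = f.coeff d * nprod θ u d := by
    rw [hS]
    simp [Nat.Ico_succ_singleton]
  set hc : ℕ → F := fun k => S (k+1) / nprod θ u (k+1) with hhc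
  set h : Polynomial F := ∑ k ∈ Finset.range d, C (hc k) * X^k with hh
  have hcoeff : ∀ j, h.coeff j = if j < d then hc j else 0 := by
    intro j
    rw [hh, Polynomial.finset_sum_coeff]
    have : ∀ k, (C (hc k) * X^k).coeff j = if k = j then hc k else 0 := by
      intro k
      rw [coeff_C_mul, coeff_X_pow]
      simp [eq_comm]
    rw [Finset.sum_congr rfl fun k _ => this k, Finset.sum_ite_eq' (Finset.range d) j hc]
    simp [Finset.mem_range]
  have htop : h.coeff (d - 1) = f.coeff d := by
    have hd1' : d - 1 + 1 = d := by omega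
    rw [hcoeff, if_pos (by omega), hhc]
    simp only []
    rw [hd1', hSd, mul_div_assoc, div_self (nprod_ne_zero θ hu d), mul_one]
  have hne : h ≠ 0 := by
    intro h0
    have : f.coeff d ≠ 0 := Polynomial.leadingCoeff_ne_zero.2 hf
    rw [← htop, h0] at this
    simp at this
  have hdegle : h.natDegree ≤ d - 1 := by
    refine Polynomial.natDegree_le_iff_coeff_eq_zero.2 fun j hj => ?_
    rw [hcoeff, if_neg (by omega)]
  have hdegge : d - 1 ≤ h.natDegree :=
    Polynomial.le_natDegree_of_ne_zero (by
      rw [htop]; exact Polynomial.leadingCoeff_ne_zero.2 hf)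
  have hdeg : h.natDegree + 1 = d := by omega
  refine ⟨h, ?_, hne, hdeg⟩
  ext k
  rw [coeff_skewMul_linear]
  rcases k with _ | k
  · -- k = 0
    rw [if_pos rfl, hcoeff 0, if_pos (by omega), hhc]
    simp only []
    have hS1 : S 1 = -f.coeff 0 := by
      have h' := hSstep 0 (by omega)
      rw [hS0, nprod_zero, mul_one] at h'
      linear_combination -h'
    rw [nprod_one, pow_zero, ringEquiv_one_apply, hS1]
    field_simp
    ring
  · -- k + 1
    rw [if_neg (Nat.succ_ne_zero k), Nat.add_sub_cancel]
    rcases lt_trichotomy (k+1) d with hlt | heq | hgt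
    · rw [hcoeff k, if_pos (by omega), hcoeff (k+1), if_pos hlt, hhc]
      simp only []
      have hrec : S (k+1) = f.coeff (k+1) * nprod θ u (k+1) + S (k+2) := hSstep (k+1) (by omega)
      have hnp : nprod θ u (k+2) = nprod θ u (k+1) * (θ^(k+1)) u := nprod_succ θ u (k+1)
      have h1 : nprod θ u (k+1) ≠ 0 := nprod_ne_zero θ hu _
      have h2 : (θ^(k+1)) u ≠ 0 := by
        simpa using (θ^(k+1)).injective.ne_iff.2 (show u ≠ (θ^(k+1)).symm 0 by simpa using hu)
      rw [hrec, hnp]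
      field_simp
      ring
    · rw [hcoeff (k+1), if_neg (by omega), mul_zero, sub_zero, hcoeff k, if_pos (by omega), hhc]
      simp only []
      rw [heq, hSd, mul_div_assoc, div_self (nprod_ne_zero θ hu d), mul_one]
    · rw [hcoeff k, if_neg (by omega), hcoeff (k+1), if_neg (by omega),
        Polynomial.coeff_eq_zero_of_natDegree_lt (show f.natDegree < k + 1 by omega)]
      simp

lemma requiv_ne_zero (e : F ≃+* F) {a : F} (ha : a ≠ 0) : e a ≠ 0 := by
  simpa using e.injective.ne_iff.2 (show a ≠ e.symm 0 by simpa using ha)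

/-- θ-conjugacy: `y` lies in the θ-conjugacy class of `x`. -/
def SConj (x y : F) : Prop := ∃ b : F, b ≠ 0 ∧ y = θ b * x * b⁻¹

lemma sconj_refl (x : F) : SConj θ x x :=
  ⟨1, one_ne_zero, by simp⟩

lemma sconj_symm {x y : F} (h : SConj θ x y) : SConj θ y x := by
  obtain ⟨b, hb, rfl⟩ := h
  have hb' : θ b ≠ 0 := requiv_ne_zero θ hb
  refine ⟨b⁻¹, inv_ne_zero hb, ?_⟩
  rw [map_inv₀, inv_inv]
  field_simp

lemma sconj_trans {x y z : F} (h1 : SConj θ x y) (h2 : SConj θ y z) : SConj θ x z := by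
  obtain ⟨b, hb, rfl⟩ := h1
  obtain ⟨c, hc, rfl⟩ := h2
  refine ⟨c * b, mul_ne_zero hc hb, ?_⟩
  rw [map_mul, mul_inv]
  try ring

lemma sconj_inv {x y : F} (h : SConj θ x y) : SConj θ x⁻¹ y⁻¹ := by
  obtain ⟨b, hb, rfl⟩ := h
  refine ⟨b⁻¹, inv_ne_zero hb, ?_⟩
  rw [map_inv₀, inv_inv, mul_inv, mul_inv, inv_inv]
  try ring

/-- Gordon–Motzkin style bound: if at most two of the (distinct, nonzero) skew roots
`v i` of `f ≠ 0` lie in any θ-conjugacy class, then `f` has at least `m` roots counted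
by degree. -/
lemma gm_bound : ∀ d m : ℕ, ∀ f : Polynomial F, f ≠ 0 → f.natDegree ≤ d →
    ∀ v : Fin m → F, Function.Injective v → (∀ i, v i ≠ 0) →
    (∀ i, sev θ (v i) f = 0) →
    (∀ i₁ i₂ i₃ : Fin m, i₁ ≠ i₂ → i₁ ≠ i₃ → i₂ ≠ i₃ →
      SConj θ (v i₁) (v i₂) → SConj θ (v i₁) (v i₃) → False) →
    m ≤ f.natDegree := by
  intro d
  induction d with
  | zero =>
    intro m f hf hdeg v hvinj hv0 hroot h3
    match m with
    | 0 => exact Nat.zero_le _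
    | m+1 =>
      exfalso
      have hC : f = C (f.coeff 0) := Polynomial.eq_C_of_natDegree_eq_zero (Nat.le_zero.1 hdeg)
      have h0 := hroot 0
      rw [hC, sev_C] at h0
      exact hf (by rw [hC, h0, map_zero])
  | succ d ih =>
    intro m f hf hdeg v hvinj hv0 hroot h3
    match m with
    | 0 => exact Nat.zero_le _
    | m+1 =>
      obtain ⟨h, hfac, hhne, hhdeg⟩ := exists_factor θ hf (hv0 0) (hroot 0)
      set u : F := v 0 with hu
      have hvne : ∀ i : Fin m, v i.succ ≠ u := fun i hEq => Fin.succ_ne_zero i (hvinj hEq)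
      have hsub : ∀ i : Fin m, v i.succ - u ≠ 0 := fun i => sub_ne_zero.2 (hvne i)
      set w : Fin m → F := fun i =>
        θ (v i.succ - u) * (v i.succ - u)⁻¹ * v i.succ with hw
      have hw0 : ∀ i, w i ≠ 0 := fun i =>
        mul_ne_zero (mul_ne_zero (requiv_ne_zero θ (hsub i)) (inv_ne_zero (hsub i))) (hv0 _)
      have hconjw : ∀ i, SConj θ (v i.succ) (w i) := fun i =>
        ⟨v i.succ - u, hsub i, by rw [hw]; ring⟩
      have hrootw : ∀ i, sev θ (w i) h = 0 := by
        intro i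
        have hr := hroot i.succ
        rw [hfac, sev_skewMul_conj θ h (hvne i)] at hr
        rcases mul_eq_zero.1 hr with h' | h'
        · exact absurd h' (hsub i)
        · exact h'
      have hwinj : Function.Injective w := by
        intro i i' hEq
        by_contra hne'
        have hxx'ne : v i.succ ≠ v i'.succ := fun hc =>
          hne' (Fin.succ_injective _ (hvinj hc))
        -- x := v i.succ, x' := v i'.succ are conjugate
        have hxx' : SConj θ (v i.succ) (v i'.succ) :=
          sconj_trans θ (hconjw i) (by rw [hEq]; exact sconj_symm θ (hconjw i'))
        obtain ⟨y, hy0, hy⟩ := hxx'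
        set x := v i.succ with hx
        set x' := v i'.succ with hx'
        have hyfix : θ y ≠ y := by
          intro hfix
          apply hxx'ne
          rw [hy, hfix]
          field_simp
        have hphiy : θ y * x - u * y = y * (x' - u) := by
          rw [hy]; field_simp
        have hphiyne : θ y * x - u * y ≠ 0 := by
          rw [hphiy]
          exact mul_ne_zero hy0 (hsub i')
        -- key2 : w i' = θ (θ y * x - u * y) * (θ y * x - u * y)⁻¹ * x
        have key2 : w i' = θ (θ y * x - u * y) * (θ y * x - u * y)⁻¹ * x := by
          have hwi' : w i' = θ (x' - u) * (x' - u)⁻¹ * x' := rfl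
          rw [hwi', hphiy, map_mul, mul_inv, hy]
          ring
        -- key1 : w i = θ (x - u) * (x - u)⁻¹ * x  (definitional)
        have key1 : w i = θ (x - u) * (x - u)⁻¹ * x := rfl
        -- cross identity
        have hxu : x - u ≠ 0 := hsub i
        have hcross : θ (θ y * x - u * y) * (x - u) = θ (x - u) * (θ y * x - u * y) := by
          have hx0 : x ≠ 0 := hv0 _
          have h1 : θ (x - u) * (x - u)⁻¹ * x = θ (θ y * x - u * y) * (θ y * x - u * y)⁻¹ * x := by
            rw [← key1, ← key2, hEq]
          have h2 : θ (x - u) * (x - u)⁻¹ = θ (θ y * x - u * y) * (θ y * x - u * y)⁻¹ :=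
            mul_right_cancel₀ hx0 h1
          have h4 : θ (x - u) * ((x - u)⁻¹ * (x - u)) * (θ y * x - u * y)
              = θ (θ y * x - u * y) * ((θ y * x - u * y)⁻¹ * (θ y * x - u * y)) * (x - u) := by
            calc θ (x - u) * ((x - u)⁻¹ * (x - u)) * (θ y * x - u * y)
                = (θ (x - u) * (x - u)⁻¹) * ((x - u) * (θ y * x - u * y)) := by ring
              _ = (θ (θ y * x - u * y) * (θ y * x - u * y)⁻¹) * ((x - u) * (θ y * x - u * y)) := by
                  rw [h2]
              _ = θ (θ y * x - u * y) * ((θ y * x - u * y)⁻¹ * (θ y * x - u * y)) * (x - u) := by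
                  ring
          rw [inv_mul_cancel₀ hxu, inv_mul_cancel₀ hphiyne, mul_one, mul_one] at h4
          linear_combination -h4
        set lam : F := (θ y * x - u * y) / (x - u) with hlam
        have hlamfix : θ lam = lam := by
          rw [hlam, map_div₀]
          rw [div_eq_div_iff (requiv_ne_zero θ hxu) hxu]
          linear_combination hcross
        have hlamphi : lam * (x - u) = θ y * x - u * y := by
          rw [hlam, div_mul_cancel₀ _ hxu]
        have hz : θ (y - lam) * x = u * (y - lam) := by
          rw [map_sub θ y lam, hlamfix]
          linear_combination -hlamphi
        have hzne : y - lam ≠ 0 := by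
          intro hz0
          apply hyfix
          have hylam : y = lam := by linear_combination hz0
          rw [hylam, hlamfix]
        have hconju : SConj θ x u := by
          refine ⟨y - lam, hzne, ?_⟩
          calc u = u * ((y - lam) * (y - lam)⁻¹) := by
                rw [mul_inv_cancel₀ hzne, mul_one]
            _ = θ (y - lam) * x * (y - lam)⁻¹ := by rw [← mul_assoc, ← hz]
        -- three distinct conjugate roots: contradiction
        exact h3 i.succ i'.succ 0 (fun hc => hne' (Fin.succ_injective _ hc))
          (Fin.succ_ne_zero i) (Fin.succ_ne_zero i')
          ⟨y, hy0, hy⟩ hconju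
      have hm : m ≤ h.natDegree :=
        ih m h hhne (by omega) w hwinj hw0 hrootw
          (fun i₁ i₂ i₃ h12 h13 h23 c12 c13 =>
            h3 i₁.succ i₂.succ i₃.succ
              (fun hc => h12 (Fin.succ_injective _ hc))
              (fun hc => h13 (Fin.succ_injective _ hc))
              (fun hc => h23 (Fin.succ_injective _ hc))
              (sconj_trans θ (hconjw i₁) (sconj_trans θ c12 (sconj_symm θ (hconjw i₂))))
              (sconj_trans θ (hconjw i₁) (sconj_trans θ c13 (sconj_symm θ (hconjw i₃)))))
      omega

end SkewAux

/-- `s₁, …, sₙ` are P-independent in `F[X;θ]`: the least common left multiple of the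
`X − sⱼ` has degree `n`; equivalently every nonzero common left multiple of the `X − sⱼ`
has degree at least `n`. -/


def PIndep {F : Type} [Field F] (θ : F ≃+* F) {n : ℕ} (s : Fin n → F) : Prop :=
  ∀ f : Polynomial F, f ≠ 0 →
    (∀ j, ∃ h, f = skewMul θ h (Polynomial.X - Polynomial.C (s j))) → n ≤ f.natDegree

/-- If `S = {s₁, …, sₙ} ⊆ F_{q^t}^*` is P-independent and at most two elements
of `S` lie in each `θ`-conjugacy class, then `S⁻¹ = {s₁⁻¹, …, sₙ⁻¹}` is P-independent. -/
theorem pIndep_inv (q t n : ℕ) (F : Type) [Field F] [Fintype F]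
    (hF : Fintype.card F = q ^ t) (θ : F ≃+* F) (hθ : ∀ x : F, θ x = x ^ q)
    (s : Fin n → F) (hs0 : ∀ j, s j ≠ 0) (hinj : Function.Injective s)
    (hP : PIndep θ s)
    (hconj : ∀ a : F, Nat.card {j : Fin n // ∃ b : F, b ≠ 0 ∧ s j = θ b * a * b⁻¹} ≤ 2) :
    PIndep θ (fun j => (s j)⁻¹) := by
  intro f hf hdvd
  have hroot : ∀ j, SkewAux.sev θ ((s j)⁻¹) f = 0 := by
    intro j
    obtain ⟨h, hfh⟩ := hdvd j
    rw [hfh]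
    exact SkewAux.sev_skewMul_root θ h _
  refine SkewAux.gm_bound θ f.natDegree n f hf le_rfl (fun j => (s j)⁻¹)
    (fun a b hab => hinj (inv_injective hab))
    (fun j => inv_ne_zero (hs0 j)) hroot ?_
  intro j₁ j₂ j₃ h12 h13 h23 c12 c13
  -- translate conjugacy of inverses back to conjugacy of the original elements
  have c12' : SkewAux.SConj θ (s j₁) (s j₂) := by
    have := SkewAux.sconj_inv θ c12
    simpa [inv_inv] using this
  have c13' : SkewAux.SConj θ (s j₁) (s j₃) := by
    have := SkewAux.sconj_inv θ c13
    simpa [inv_inv] using this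
  -- three distinct elements of the conjugacy class of s j₁ : contradiction with hconj
  have key := hconj (s j₁)
  have e1 : ∃ b : F, b ≠ 0 ∧ s j₁ = θ b * (s j₁) * b⁻¹ := SkewAux.sconj_refl θ (s j₁)
  have e2 : ∃ b : F, b ≠ 0 ∧ s j₂ = θ b * (s j₁) * b⁻¹ := c12'
  have e3 : ∃ b : F, b ≠ 0 ∧ s j₃ = θ b * (s j₁) * b⁻¹ := c13'
  let g : Fin 3 → {j : Fin n // ∃ b : F, b ≠ 0 ∧ s j = θ b * (s j₁) * b⁻¹} := fun i =>
    match i with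
    | 0 => ⟨j₁, e1⟩
    | 1 => ⟨j₂, e2⟩
    | 2 => ⟨j₃, e3⟩
  have hginj : Function.Injective g := by
    intro a b hab
    have hval := congrArg Subtype.val hab
    fin_cases a <;> fin_cases b <;>
      first
        | rfl
        | exact absurd hval h12
        | exact absurd hval h13
        | exact absurd hval h23
        | exact absurd hval.symm h12
        | exact absurd hval.symm h13
        | exact absurd hval.symm h23
  have h3le : (3 : ℕ) ≤ Nat.card {j : Fin n // ∃ b : F, b ≠ 0 ∧ s j = θ b * (s j₁) * b⁻¹} := by
    have hle := Nat.card_le_card_of_injective g hginj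
    simpa using hle
  omega
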